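/- Let (X,Σ,m) be a σ-finite measure space, p ∈ (1,∞), M an L^p(m)-Banach L^∞(m)-module, and ε ∈ (0,2]. Suppose v,w ∈ M and E ∈ Σ with m(E) > 0 satisfy |v|=|w|=1 and |v-w| > ε m-a.e. on E. Then |(v+w)/2| ≤ 1 - δ_M(ε) holds m-a.e. on E, where δ_M is the modulus of convexity of the Banach space (M, ‖·‖). -/

import Mathlib

open MeasureTheory Filter
open scoped ENNReal

/-- A module structure over `L^∞(m)` on a real normed space `M`, encoded via a scalar
multiplication map `smul : L^∞(m) → M → M`; multiplication in `L^∞(m)` and constants are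
expressed via a.e. representatives. -/
structure LinftyModuleStruct {X : Type*} [MeasurableSpace X] (m : Measure X)
    (M : Type*) [NormedAddCommGroup M] [Module ℝ M] where
  smul : Lp ℝ ∞ m → M → M
  smul_add : ∀ (f : Lp ℝ ∞ m) (u v : M), smul f (u + v) = smul f u + smul f v
  add_smul : ∀ (f g : Lp ℝ ∞ m) (v : M), smul (f + g) v = smul f v + smul g v
  mul_smul : ∀ (f g h : Lp ℝ ∞ m) (v : M),
    ((h : X → ℝ) =ᵐ[m] fun x => f x * g x) → smul h v = smul f (smul g v)
  const_smul : ∀ (f : Lp ℝ ∞ m) (c : ℝ) (v : M),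
    ((f : X → ℝ) =ᵐ[m] fun _ => c) → smul f v = c • v

/-- `pn` is an `L^p(m)`-pointwise norm on the `L^∞(m)`-module `M` inducing the norm of `M`. -/
structure IsPointwiseNorm {X : Type*} [MeasurableSpace X] (m : Measure X) (p : ℝ)
    {M : Type*} [NormedAddCommGroup M] [Module ℝ M]
    (A : LinftyModuleStruct m M) (pn : M → X → ℝ) : Prop where
  memLp : ∀ v : M, MemLp (pn v) (ENNReal.ofReal p) m
  nonneg : ∀ v : M, ∀ᵐ x ∂m, 0 ≤ pn v x
  eq_zero_iff : ∀ v : M, (pn v =ᵐ[m] 0) ↔ v = 0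
  triangle : ∀ v w : M, ∀ᵐ x ∂m, pn (v + w) x ≤ pn v x + pn w x
  smul_eq : ∀ (f : Lp ℝ ∞ m) (v : M), pn (A.smul f v) =ᵐ[m] fun x => |f x| * pn v x
  norm_eq : ∀ v : M, ‖v‖ = (∫ x, pn v x ^ p ∂m) ^ (1 / p)

/-- The modulus of convexity of a normed space `V`. -/
noncomputable def modulusOfConvexity (V : Type*) [NormedAddCommGroup V] [Module ℝ V]
    (ε : ℝ) : ℝ :=
  sInf {r : ℝ | ∃ v w : V, ‖v‖ = 1 ∧ ‖w‖ = 1 ∧ ε ≤ ‖v - w‖ ∧ r = 1 - ‖(2 : ℝ)⁻¹ • (v + w)‖}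

section Helpers

variable {X : Type*} [MeasurableSpace X] {m : Measure X}
variable {M : Type*} [NormedAddCommGroup M] [Module ℝ M]

lemma LMS_smul_const_smul (A : LinftyModuleStruct m M) (f : Lp ℝ ∞ m) (c : ℝ) (v : M) :
    A.smul f (c • v) = c • A.smul f v := by
  set g : Lp ℝ ∞ m := MemLp.toLp (fun _ => c) (memLp_top_const c) with hgdef
  have hg : (g : X → ℝ) =ᵐ[m] fun _ => c := MemLp.coeFn_toLp _
  have hcf : ((c • f : Lp ℝ ∞ m) : X → ℝ) =ᵐ[m] fun x => (f : X → ℝ) x * (g : X → ℝ) x := by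
    filter_upwards [Lp.coeFn_smul c f, hg] with x h1 h2
    simp [h1, h2, mul_comm]
  have hcf' : ((c • f : Lp ℝ ∞ m) : X → ℝ) =ᵐ[m] fun x => (g : X → ℝ) x * (f : X → ℝ) x := by
    filter_upwards [hcf] with x h1
    rw [h1, mul_comm]
  have e1 := A.mul_smul f g (c • f) v hcf
  have e2 := A.mul_smul g f (c • f) v hcf'
  rw [A.const_smul g c v hg] at e1
  rw [A.const_smul g c (A.smul f v) hg] at e2
  rw [← e1, e2]

lemma LMS_smul_sub (A : LinftyModuleStruct m M) (f : Lp ℝ ∞ m) (v w : M) :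
    A.smul f (v - w) = A.smul f v - A.smul f w := by
  have h := A.smul_add f (v - w) w
  rw [sub_add_cancel] at h
  rw [h]; abel

lemma pn_const_smul {p : ℝ} {A : LinftyModuleStruct m M} {pn : M → X → ℝ}
    (hpn : IsPointwiseNorm m p A pn) (c : ℝ) (v : M) :
    pn (c • v) =ᵐ[m] fun x => |c| * pn v x := by
  set g : Lp ℝ ∞ m := MemLp.toLp (fun _ => c) (memLp_top_const c) with hgdef
  have hg : (g : X → ℝ) =ᵐ[m] fun _ => c := MemLp.coeFn_toLp _
  have h1 : A.smul g v = c • v := A.const_smul g c v hg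
  have h2 := hpn.smul_eq g v
  rw [h1] at h2
  filter_upwards [h2, hg] with x hx hgx
  rw [hx, hgx]

lemma pn_rpow_integrable {p : ℝ} (hp : 1 < p) {A : LinftyModuleStruct m M} {pn : M → X → ℝ}
    (hpn : IsPointwiseNorm m p A pn) (z : M) :
    Integrable (fun x => pn z x ^ p) m := by
  have hp0 : 0 < p := lt_trans one_pos hp
  have h1 := (hpn.memLp z).integrable_norm_rpow
    (by simpa [ENNReal.ofReal_eq_zero, not_le] using hp0) ENNReal.ofReal_ne_top
  rw [ENNReal.toReal_ofReal hp0.le] at h1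
  refine h1.congr ?_
  filter_upwards [hpn.nonneg z] with x hx
  rw [Real.norm_of_nonneg hx]

lemma norm_const_smul {p : ℝ} (hp : 1 < p)
    {A : LinftyModuleStruct m M} {pn : M → X → ℝ} (hpn : IsPointwiseNorm m p A pn)
    (c : ℝ) (v : M) : ‖c • v‖ = |c| * ‖v‖ := by
  have hp0 : 0 < p := lt_trans one_pos hp
  rw [hpn.norm_eq (c • v), hpn.norm_eq v]
  have heq : (fun x => pn (c • v) x ^ p) =ᵐ[m] fun x => |c| ^ p * pn v x ^ p := by
    filter_upwards [pn_const_smul hpn c v, hpn.nonneg v] with x h1 h2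
    rw [h1, Real.mul_rpow (abs_nonneg c) h2]
  rw [integral_congr_ae heq, integral_const_mul]
  have hI : 0 ≤ ∫ x, pn v x ^ p ∂m :=
    integral_nonneg_of_ae (by
      filter_upwards [hpn.nonneg v] with x hx
      exact Real.rpow_nonneg hx p)
  rw [Real.mul_rpow (Real.rpow_nonneg (abs_nonneg c) p) hI, ← Real.rpow_mul (abs_nonneg c),
    mul_one_div_cancel hp0.ne', Real.rpow_one]

lemma key_bound {p : ℝ} (hp : 1 < p)
    {A : LinftyModuleStruct m M} {pn : M → X → ℝ} (hpn : IsPointwiseNorm m p A pn)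
    {ε : ℝ} (hε : 0 < ε)
    {v w : M} {E : Set X}
    (hv : ∀ᵐ x ∂m, x ∈ E → pn v x = 1)
    (hw : ∀ᵐ x ∂m, x ∈ E → pn w x = 1)
    (hvw : ∀ᵐ x ∂m, x ∈ E → ε < pn (v - w) x)
    {F : Set X} (hF : MeasurableSet F) (hFE : F ⊆ E)
    (hF0 : 0 < m F) (hFfin : m F < ∞) :
    0 ≤ 1 - modulusOfConvexity M ε ∧
      ∫ x in F, pn ((2 : ℝ)⁻¹ • (v + w)) x ^ p ∂m
        ≤ (1 - modulusOfConvexity M ε) ^ p * (m F).toReal := by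
  have hp0 : 0 < p := lt_trans one_pos hp
  have hμ : 0 < (m F).toReal := ENNReal.toReal_pos hF0.ne' hFfin.ne
  set μF := (m F).toReal with hμFdef
  set c : ℝ := μF ^ (-p⁻¹) with hc
  have hcpos : 0 < c := Real.rpow_pos_of_pos hμ _
  have hcp : c ^ p = μF⁻¹ := by
    rw [hc, ← Real.rpow_mul hμ.le, neg_mul, inv_mul_cancel₀ hp0.ne', Real.rpow_neg_one]
  have hmem : MemLp (F.indicator fun _ => (1 : ℝ)) ∞ m :=
    memLp_top_of_bound ((stronglyMeasurable_const.indicator hF).aestronglyMeasurable) 1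
      (Eventually.of_forall fun x => by
        by_cases hx : x ∈ F <;> simp [Set.indicator_of_mem, Set.indicator_of_notMem, hx])
  set fF : Lp ℝ ∞ m := hmem.toLp _ with hfFdef
  have hfF : (fF : X → ℝ) =ᵐ[m] F.indicator fun _ => 1 := hmem.coeFn_toLp
  -- pointwise norm of the normalized truncation
  have hpnT : ∀ z : M, pn (c • A.smul fF z) =ᵐ[m]
      fun x => c * (F.indicator (fun _ => (1 : ℝ)) x * pn z x) := by
    intro z
    have h1 := pn_const_smul hpn c (A.smul fF z)
    have h2 := hpn.smul_eq fF z
    filter_upwards [h1, h2, hfF] with x e1 e2 e3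
    rw [e1, e2, e3, abs_of_pos hcpos]
    congr 1
    by_cases hx : x ∈ F <;> simp [hx]
  have hTnorm : ∀ z : M, ‖c • A.smul fF z‖ = (μF⁻¹ * ∫ x in F, pn z x ^ p ∂m) ^ (1 / p) := by
    intro z
    rw [hpn.norm_eq (c • A.smul fF z)]
    congr 1
    have heq : (fun x => pn (c • A.smul fF z) x ^ p) =ᵐ[m]
        fun x => c ^ p * F.indicator (fun y => pn z y ^ p) x := by
      filter_upwards [hpnT z, hpn.nonneg z] with x e1 e2
      rw [e1]
      by_cases hx : x ∈ F
      · rw [Set.indicator_of_mem hx, Set.indicator_of_mem hx, one_mul,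
          Real.mul_rpow hcpos.le e2]
      · rw [Set.indicator_of_notMem hx, Set.indicator_of_notMem hx, zero_mul, mul_zero,
          mul_zero, Real.zero_rpow hp0.ne']
    rw [integral_congr_ae heq, integral_const_mul, integral_indicator hF, hcp]
  -- norm of normalized v and w
  have hnorm_one : ∀ z : M, (∀ᵐ x ∂m, x ∈ E → pn z x = 1) → ‖c • A.smul fF z‖ = 1 := by
    intro z hz
    rw [hTnorm z]
    have h1 : ∫ x in F, pn z x ^ p ∂m = ∫ x in F, (1 : ℝ) ∂m := by
      refine setIntegral_congr_ae hF ?_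
      filter_upwards [hz] with x hx hxF
      rw [hx (hFE hxF), Real.one_rpow]
    rw [h1, setIntegral_const, smul_eq_mul, mul_one, measureReal_def, ← hμFdef, inv_mul_cancel₀ hμ.ne',
      Real.one_rpow]
  have hTv : ‖c • A.smul fF v‖ = 1 := hnorm_one v hv
  have hTw : ‖c • A.smul fF w‖ = 1 := hnorm_one w hw
  -- the difference
  have hTsub : c • A.smul fF v - c • A.smul fF w = c • A.smul fF (v - w) := by
    rw [LMS_smul_sub, smul_sub]
  have hTvw : ε ≤ ‖c • A.smul fF v - c • A.smul fF w‖ := by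
    rw [hTsub, hTnorm (v - w)]
    have h1 : ε ^ p * μF ≤ ∫ x in F, pn (v - w) x ^ p ∂m := by
      have hconst : ∫ x in F, (ε ^ p) ∂m = ε ^ p * μF := by
        rw [setIntegral_const, smul_eq_mul, mul_comm, measureReal_def]
      rw [← hconst]
      refine setIntegral_mono_ae_restrict (integrableOn_const hFfin.ne)
        ((pn_rpow_integrable hp hpn (v - w)).integrableOn) ?_
      filter_upwards [ae_restrict_of_ae hvw, ae_restrict_mem hF] with x hx hxF
      exact Real.rpow_le_rpow hε.le (hx (hFE hxF)).le hp0.le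
    have h2 : ε = (μF⁻¹ * (ε ^ p * μF)) ^ (1 / p) := by
      have : μF⁻¹ * (ε ^ p * μF) = ε ^ p := by
        field_simp
      rw [this, ← Real.rpow_mul hε.le, mul_one_div_cancel hp0.ne', Real.rpow_one]
    rw [h2]
    refine Real.rpow_le_rpow (by positivity) ?_ (by positivity)
    exact mul_le_mul_of_nonneg_left h1 (by positivity)
  -- the midpoint
  have hmid : c • A.smul fF ((2 : ℝ)⁻¹ • (v + w))
      = (2 : ℝ)⁻¹ • (c • A.smul fF v + c • A.smul fF w) := by
    rw [LMS_smul_const_smul, A.smul_add]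
    module
  -- modulus of convexity bound
  have hδ : modulusOfConvexity M ε
      ≤ 1 - ‖(2 : ℝ)⁻¹ • (c • A.smul fF v + c • A.smul fF w)‖ := by
    refine csInf_le ⟨0, ?_⟩ ⟨_, _, hTv, hTw, hTvw, rfl⟩
    rintro r ⟨a, b, ha, hb, -, rfl⟩
    have hab : ‖(2 : ℝ)⁻¹ • (a + b)‖ ≤ 1 := by
      rw [norm_const_smul hp hpn]
      calc |(2 : ℝ)⁻¹| * ‖a + b‖ ≤ 2⁻¹ * (‖a‖ + ‖b‖) := by
            rw [abs_of_pos (by norm_num : (0:ℝ) < 2⁻¹)]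
            exact mul_le_mul_of_nonneg_left (norm_add_le a b) (by norm_num)
        _ = 1 := by rw [ha, hb]; norm_num
    linarith
  rw [← hmid] at hδ
  set δ := modulusOfConvexity M ε with hδdef
  have hle : ‖c • A.smul fF ((2 : ℝ)⁻¹ • (v + w))‖ ≤ 1 - δ := by linarith
  have h1δ : 0 ≤ 1 - δ := le_trans (norm_nonneg _) hle
  refine ⟨h1δ, ?_⟩
  rw [hTnorm ((2 : ℝ)⁻¹ • (v + w))] at hle
  have hI0 : 0 ≤ ∫ x in F, pn ((2 : ℝ)⁻¹ • (v + w)) x ^ p ∂m := by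
    refine setIntegral_nonneg_of_ae_restrict ?_
    filter_upwards [ae_restrict_of_ae (hpn.nonneg ((2 : ℝ)⁻¹ • (v + w)))] with x hx
    exact Real.rpow_nonneg hx p
  have hbase : 0 ≤ μF⁻¹ * ∫ x in F, pn ((2 : ℝ)⁻¹ • (v + w)) x ^ p ∂m := by positivity
  have h2 : μF⁻¹ * ∫ x in F, pn ((2 : ℝ)⁻¹ • (v + w)) x ^ p ∂m ≤ (1 - δ) ^ p := by
    have h3 := Real.rpow_le_rpow (Real.rpow_nonneg hbase _) hle hp0.le
    rwa [← Real.rpow_mul hbase, one_div, inv_mul_cancel₀ hp0.ne', Real.rpow_one] at h3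
  have h4 := mul_le_mul_of_nonneg_left h2 hμ.le
  rw [← mul_assoc, mul_inv_cancel₀ hμ.ne', one_mul] at h4
  linarith [h4, mul_comm μF ((1 - δ) ^ p)]

end Helpers

/-- In an `L^p(m)`-Banach `L^∞(m)`-module, if `|v| = |w| = 1` and `|v - w| > ε` a.e. on a set
`E` of positive measure, then `|(v+w)/2| ≤ 1 - δ_M(ε)` a.e. on `E`. -/
theorem pointwise_midpoint_bound_of_pointwise_norm
    {X : Type*} [MeasurableSpace X] (m : Measure X) [SigmaFinite m]
    {M : Type*} [NormedAddCommGroup M] [Module ℝ M] [CompleteSpace M]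
    (p : ℝ) (hp : 1 < p)
    (A : LinftyModuleStruct m M) (pn : M → X → ℝ) (hpn : IsPointwiseNorm m p A pn)
    (ε : ℝ) (hε : ε ∈ Set.Ioc (0 : ℝ) 2)
    (v w : M) (E : Set X) (hE : MeasurableSet E) (hEpos : 0 < m E)
    (hv : ∀ᵐ x ∂m, x ∈ E → pn v x = 1)
    (hw : ∀ᵐ x ∂m, x ∈ E → pn w x = 1)
    (hvw : ∀ᵐ x ∂m, x ∈ E → ε < pn (v - w) x) :
    ∀ᵐ x ∂m, x ∈ E → pn ((2 : ℝ)⁻¹ • (v + w)) x ≤ 1 - modulusOfConvexity M ε := by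
  classical
  obtain ⟨hε0, hε2⟩ := hε
  have hp0 : 0 < p := lt_trans one_pos hp
  set δ := modulusOfConvexity M ε with hδdef
  set u : M := (2 : ℝ)⁻¹ • (v + w) with hu
  obtain ⟨g, hgsm, hgu⟩ := (hpn.memLp u).aestronglyMeasurable
  have hgmeas : Measurable g := hgsm.measurable
  by_contra hcon
  set B : Set X := E ∩ {x | 1 - δ < g x} with hB
  have hBmeas : MeasurableSet B := hE.inter (measurableSet_lt measurable_const hgmeas)
  have hBpos : 0 < m B := by
    rcases eq_zero_or_pos (m B) with hB0 | hB0
    · exfalso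
      apply hcon
      have hBc : ∀ᵐ x ∂m, x ∉ B := compl_mem_ae_iff.2 hB0
      filter_upwards [hgu, hBc] with x hx hxB hxE
      by_contra hlt
      push_neg at hlt
      exact hxB ⟨hxE, by simpa [← hx] using hlt⟩
    · exact hB0
  have hcover : B ⊆ ⋃ n : ℕ, E ∩ {x | 1 - δ + 1 / ((n : ℝ) + 1) ≤ g x} := by
    rintro x ⟨hxE, hxg⟩
    have hxg' : 1 - δ < g x := hxg
    obtain ⟨n, hn⟩ := exists_nat_one_div_lt (sub_pos.2 hxg')
    exact Set.mem_iUnion.2 ⟨n, hxE, by simp only [Set.mem_setOf_eq]; linarith⟩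
  have hex : ∃ n : ℕ, 0 < m (E ∩ {x | 1 - δ + 1 / ((n : ℝ) + 1) ≤ g x}) := by
    by_contra hall
    push_neg at hall
    have hnull : m B = 0 :=
      measure_mono_null hcover
        (measure_iUnion_null fun n => le_antisymm (hall n) zero_le)
    exact hBpos.ne' hnull
  obtain ⟨n, hn⟩ := hex
  have hCnmeas : MeasurableSet (E ∩ {x | 1 - δ + 1 / ((n : ℝ) + 1) ≤ g x}) :=
    hE.inter (measurableSet_le measurable_const hgmeas)
  obtain ⟨F, hFmeas, hFsub, hFpos, hFfin⟩ := Measure.exists_subset_measure_lt_top hCnmeas hn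
  have hFE : F ⊆ E := fun x hx => (hFsub hx).1
  obtain ⟨h1δ, hkey⟩ := key_bound hp hpn hε0 hv hw hvw hFmeas hFE hFpos hFfin
  have hμ : 0 < (m F).toReal := ENNReal.toReal_pos hFpos.ne' hFfin.ne
  have heqI : ∫ x in F, pn u x ^ p ∂m = ∫ x in F, g x ^ p ∂m := by
    refine setIntegral_congr_ae hFmeas ?_
    filter_upwards [hgu] with x hx _
    rw [hx]
  have hgint : IntegrableOn (fun x => g x ^ p) F m := by
    have heqae : (fun x => pn u x ^ p) =ᵐ[m] fun x => g x ^ p := by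
      filter_upwards [hgu] with x hx
      rw [hx]
    exact ((pn_rpow_integrable hp hpn u).congr heqae).integrableOn
  have hlower : (1 - δ + 1 / ((n : ℝ) + 1)) ^ p * (m F).toReal ≤ ∫ x in F, g x ^ p ∂m := by
    have hconst : ∫ x in F, ((1 - δ + 1 / ((n : ℝ) + 1)) ^ p) ∂m
        = (1 - δ + 1 / ((n : ℝ) + 1)) ^ p * (m F).toReal := by
      rw [setIntegral_const, smul_eq_mul, mul_comm, measureReal_def]
    rw [← hconst]
    refine setIntegral_mono_on (integrableOn_const hFfin.ne) hgint hFmeas ?_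
    intro x hx
    have h2 : 1 - δ + 1 / ((n : ℝ) + 1) ≤ g x := (hFsub hx).2
    refine Real.rpow_le_rpow ?_ h2 hp0.le
    have : (0 : ℝ) < 1 / ((n : ℝ) + 1) := by positivity
    linarith
  have hcontra : (1 - δ + 1 / ((n : ℝ) + 1)) ^ p ≤ (1 - δ) ^ p := by
    have h5 : (1 - δ + 1 / ((n : ℝ) + 1)) ^ p * (m F).toReal ≤ (1 - δ) ^ p * (m F).toReal := by
      calc (1 - δ + 1 / ((n : ℝ) + 1)) ^ p * (m F).toReal
          ≤ ∫ x in F, g x ^ p ∂m := hlower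
        _ = ∫ x in F, pn u x ^ p ∂m := heqI.symm
        _ ≤ (1 - δ) ^ p * (m F).toReal := hkey
    exact le_of_mul_le_mul_right h5 hμ
  have hstrict : (1 - δ) ^ p < (1 - δ + 1 / ((n : ℝ) + 1)) ^ p := by
    refine Real.rpow_lt_rpow h1δ ?_ hp0
    have : (0 : ℝ) < 1 / ((n : ℝ) + 1) := by positivity
    linarith
  linarith
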